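/- Let f and g be power series with nonnegative integer coefficients and zero constant term, each convergent on a disk of radius strictly greater than 1/λ (where λ > 1), with f(1/λ) = g(1/λ) = 1, and assume both 1/(1-f) and 1/(1-g) have, on some disk of radius r > 1/λ, a unique pole at z = 1/λ which is simple. Define a_n by exp(Σ_{n≥1} (a_n/n) z^n) = (1-g(z))/(1-f(z)) as formal power series. Then limsup |a_n|^{1/n} < λ. -/

import Mathlib

open Filter ENNReal Metric

/-- Let `f, g ∈ z·ℤ≥0[[z]]` converge on a disk of radius
`r > 1/λ` (`λ > 1`), with `f(1/λ) = g(1/λ) = 1`, and assume each of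
`1/(1−f)`, `1/(1−g)` has, on the disk `|z| < r`, a unique pole at `z = 1/λ`
which is simple (expressed by factorizations `1 − f(z) = (1 − λz)·u(z)` with
`u` holomorphic and nonvanishing, and similarly for `g`).  Define `(a_n)` by
`exp(Σ_{n≥1} (a_n/n) z^n) = (1−g(z))/(1−f(z))` near `0`.  Then
`limsup |a_n|^{1/n} < λ`. -/
theorem stmt3 (f g : ℕ → ℕ) (a : ℕ → ℤ) (lam r : ℝ)
    (hf0 : f 0 = 0) (hg0 : g 0 = 0)
    (hlam : 1 < lam) (hr : lam⁻¹ < r)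
    (hfs : Summable fun n : ℕ => (f n : ℝ) * r ^ n)
    (hgs : Summable fun n : ℕ => (g n : ℝ) * r ^ n)
    (hf1 : ∑' n : ℕ, (f n : ℝ) * lam⁻¹ ^ n = 1)
    (hg1 : ∑' n : ℕ, (g n : ℝ) * lam⁻¹ ^ n = 1)
    (hfpole : ∃ u : ℂ → ℂ, DifferentiableOn ℂ u (ball (0 : ℂ) r) ∧
      (∀ z ∈ ball (0 : ℂ) r, u z ≠ 0) ∧
      ∀ z ∈ ball (0 : ℂ) r,
        1 - ∑' n : ℕ, (f n : ℂ) * z ^ n = (1 - (lam : ℂ) * z) * u z)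
    (hgpole : ∃ u : ℂ → ℂ, DifferentiableOn ℂ u (ball (0 : ℂ) r) ∧
      (∀ z ∈ ball (0 : ℂ) r, u z ≠ 0) ∧
      ∀ z ∈ ball (0 : ℂ) r,
        1 - ∑' n : ℕ, (g n : ℂ) * z ^ n = (1 - (lam : ℂ) * z) * u z)
    (ha : ∃ ε > (0 : ℝ), ∃ L : ℂ → ℂ, ∀ z : ℂ, ‖z‖ < ε →
      HasSum (fun n : ℕ => (a n : ℂ) / (n : ℂ) * z ^ n) (L z) ∧
      Complex.exp (L z) =
        (1 - ∑' n : ℕ, (g n : ℂ) * z ^ n) / (1 - ∑' n : ℕ, (f n : ℂ) * z ^ n)) :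
    Filter.atTop.limsup (fun n : ℕ => (((a n).natAbs : ℝ≥0∞)) ^ (1 / (n : ℝ)))
      < ENNReal.ofReal lam := by
  classical
  obtain ⟨uf, hufd, hufne, huf⟩ := hfpole
  obtain ⟨ug, hugd, hugne, hug⟩ := hgpole
  obtain ⟨ε, hε, L, hL⟩ := ha
  have hlam0 : (0:ℝ) < lam := lt_trans one_pos hlam
  have hinv0 : (0:ℝ) < lam⁻¹ := by positivity
  have hinv1 : lam⁻¹ < 1 := by
    rw [inv_lt_one_iff₀]; right; exact hlam
  have hrpos : (0:ℝ) < r := hinv0.trans hr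
  set r1 : ℝ := (lam⁻¹ + r)/2 with hr1def
  set r0 : ℝ := (lam⁻¹ + r1)/2 with hr0def
  have h01 : lam⁻¹ < r1 := by rw [hr1def]; linarith
  have h1r : r1 < r := by rw [hr1def]; linarith
  have hr1pos : 0 < r1 := hinv0.trans h01
  have h00 : lam⁻¹ < r0 := by rw [hr0def]; linarith
  have h0r1 : r0 < r1 := by rw [hr0def]; linarith
  have hr0pos : 0 < r0 := hinv0.trans h00
  -- key bound on tsums
  have key : ∀ (c : ℕ → ℕ), c 0 = 0 →
      (Summable fun n : ℕ => (c n : ℝ) * r ^ n) →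
      (∑' n : ℕ, (c n : ℝ) * lam⁻¹ ^ n = 1) →
      ∀ z : ℂ, ‖z‖ < lam⁻¹ → ‖∑' n : ℕ, (c n : ℂ) * z ^ n‖ ≤ lam * ‖z‖ := by
    intro c hc0 hcs hc1 z hz
    have hz0 : 0 ≤ ‖z‖ := norm_nonneg z
    have hlz : lam * ‖z‖ < 1 := by
      have := mul_lt_mul_of_pos_left hz hlam0
      rwa [mul_inv_cancel₀ hlam0.ne'] at this
    have hlz0 : 0 ≤ lam * ‖z‖ := by positivity
    have hsl : Summable fun n : ℕ => (c n : ℝ) * lam⁻¹ ^ n := by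
      refine Summable.of_nonneg_of_le (fun n => by positivity) (fun n => ?_) hcs
      exact mul_le_mul_of_nonneg_left (pow_le_pow_left₀ hinv0.le hr.le n) (by positivity)
    have hterm : ∀ n : ℕ, ‖(c n : ℂ) * z ^ n‖ ≤ (lam * ‖z‖) * ((c n : ℝ) * lam⁻¹ ^ n) := by
      intro n
      match n with
      | 0 => simp [hc0]
      | m+1 =>
        have h1 : ‖(c (m+1) : ℂ) * z ^ (m+1)‖ = (c (m+1) : ℝ) * ‖z‖ ^ (m+1) := by
          rw [norm_mul, norm_pow]; norm_num
        rw [h1]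
        have h2 : ‖z‖ ^ (m+1) ≤ (lam * ‖z‖) * lam⁻¹ ^ (m+1) := by
          have he : ‖z‖ ^ (m+1) = (lam * ‖z‖)^(m+1) * lam⁻¹ ^ (m+1) := by
            rw [← mul_pow]
            congr 1
            field_simp
          rw [he]
          have hp : (lam * ‖z‖)^(m+1) ≤ (lam * ‖z‖)^1 :=
            pow_le_pow_of_le_one hlz0 hlz.le (by omega)
          rw [pow_one] at hp
          exact mul_le_mul_of_nonneg_right hp (by positivity)
        calc (c (m+1) : ℝ) * ‖z‖ ^ (m+1)
            ≤ (c (m+1) : ℝ) * ((lam * ‖z‖) * lam⁻¹ ^ (m+1)) :=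
              mul_le_mul_of_nonneg_left h2 (by positivity)
          _ = (lam * ‖z‖) * ((c (m+1) : ℝ) * lam⁻¹ ^ (m+1)) := by ring
    have hns : Summable fun n : ℕ => ‖(c n : ℂ) * z ^ n‖ := by
      refine Summable.of_nonneg_of_le (fun n => norm_nonneg _) hterm ?_
      exact hsl.mul_left _
    calc ‖∑' n : ℕ, (c n : ℂ) * z ^ n‖ ≤ ∑' n : ℕ, ‖(c n : ℂ) * z ^ n‖ :=
          norm_tsum_le_tsum_norm hns
      _ ≤ ∑' n : ℕ, (lam * ‖z‖) * ((c n : ℝ) * lam⁻¹ ^ n) :=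
          Summable.tsum_le_tsum hterm hns (hsl.mul_left _)
      _ = (lam * ‖z‖) * ∑' n : ℕ, ((c n : ℝ) * lam⁻¹ ^ n) := tsum_mul_left
      _ = lam * ‖z‖ := by rw [hc1, mul_one]
  have hFne : ∀ z : ℂ, ‖z‖ < lam⁻¹ → (1 - ∑' n : ℕ, (f n : ℂ) * z ^ n) ≠ 0 := by
    intro z hz h0
    have hb := key f hf0 hfs hf1 z hz
    rw [sub_eq_zero] at h0
    rw [← h0, norm_one] at hb
    have : lam * ‖z‖ < 1 := by
      have := mul_lt_mul_of_pos_left hz hlam0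
      rwa [mul_inv_cancel₀ hlam0.ne'] at this
    linarith
  -- the ratio function and its logarithmic derivative
  set R : ℂ → ℂ := fun z => ug z / uf z with hRdef
  have hRdiff : DifferentiableOn ℂ R (ball (0:ℂ) r) := hugd.div hufd hufne
  have hRne : ∀ z ∈ ball (0:ℂ) r, R z ≠ 0 := fun z hz =>
    div_ne_zero (hugne z hz) (hufne z hz)
  have hRan : AnalyticOnNhd ℂ R (ball (0:ℂ) r) := hRdiff.analyticOnNhd isOpen_ball
  set G : ℂ → ℂ := fun z => deriv R z / R z with hGdef
  have hGdiff : DifferentiableOn ℂ G (ball (0:ℂ) r) :=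
    DifferentiableOn.div hRan.deriv.differentiableOn hRdiff hRne
  have hrr1 : closedBall (0:ℂ) (r1.toNNReal : ℝ) ⊆ ball (0:ℂ) r := by
    rw [Real.coe_toNNReal _ hr1pos.le]; exact closedBall_subset_ball h1r
  have hq : HasFPowerSeriesOnBall G (cauchyPowerSeries G 0 r1.toNNReal) 0 r1.toNNReal :=
    (hGdiff.mono hrr1).hasFPowerSeriesOnBall (Real.toNNReal_pos.mpr hr1pos)
  set q := cauchyPowerSeries G 0 r1.toNNReal with hqdef
  have hqC : ∃ C > 0, ∀ n, ‖q n‖ * r0 ^ n ≤ C := by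
    obtain ⟨C, hC, hb⟩ := q.norm_mul_pow_le_of_lt_radius (r := r0.toNNReal)
      (lt_of_lt_of_le (by
        rw [ENNReal.coe_lt_coe]
        exact_mod_cast (Real.toNNReal_lt_toNNReal_iff hr1pos).mpr h0r1) hq.r_le)
    refine ⟨C, hC, fun n => ?_⟩
    have := hb n
    rwa [Real.coe_toNNReal _ hr0pos.le] at this
  -- local power series for L
  set et : ℝ := min ε lam⁻¹ / 2 with hetdef
  have het0 : 0 < et := by
    rw [hetdef]; have := lt_min hε hinv0; positivity
  have hetε : et < ε := by
    rw [hetdef]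
    have h1 : min ε lam⁻¹ ≤ ε := min_le_left _ _
    linarith [lt_min hε hinv0]
  have hetinv : et < lam⁻¹ := by
    rw [hetdef]
    have h1 : min ε lam⁻¹ ≤ lam⁻¹ := min_le_right _ _
    linarith [lt_min hε hinv0]
  set p := FormalMultilinearSeries.ofScalars ℂ (fun n => (a n : ℂ) / n) with hpdef
  have hnormet : ‖(et : ℂ)‖ = et := by
    rw [Complex.norm_real, Real.norm_eq_abs, abs_of_pos het0]
  have hrad : ENNReal.ofReal et ≤ p.radius := by
    have hsum := ((hL (et : ℂ) (by rw [hnormet]; exact hetε)).1).summable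
    have ht : Filter.Tendsto (fun n : ℕ => ‖p n‖ * (et.toNNReal : ℝ) ^ n) atTop (nhds 0) := by
      have h0 := hsum.tendsto_atTop_zero
      have h1 := h0.norm
      rw [norm_zero] at h1
      convert h1 using 2 with n
      rw [hpdef, FormalMultilinearSeries.ofScalars_norm, Real.coe_toNNReal _ het0.le,
        norm_mul, norm_pow, hnormet]
    have := p.le_radius_of_tendsto ht
    rwa [ENNReal.ofReal]
  have hLp : HasFPowerSeriesOnBall L p 0 (ENNReal.ofReal et) := by
    refine ⟨hrad, ENNReal.ofReal_pos.mpr het0, ?_⟩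
    intro y hy
    rw [EMetric.mem_ball, edist_zero_right, ← ofReal_norm,
      ENNReal.ofReal_lt_ofReal_iff het0] at hy
    have h := (hL y (hy.trans hetε)).1
    rw [zero_add]
    convert h using 2 with n
    · rfl
    rw [hpdef, FormalMultilinearSeries.ofScalars_apply_eq, smul_eq_mul]
  -- power series of the derivative of L
  set e : (ℂ →L[ℂ] ℂ) →L[ℂ] ℂ := ContinuousLinearMap.apply ℂ ℂ (1:ℂ) with hedef
  set pd := e.compFormalMultilinearSeries p.derivSeries with hpddef
  have hLd : HasFPowerSeriesOnBall (deriv L) pd 0 (ENNReal.ofReal et) := by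
    have h1 := e.comp_hasFPowerSeriesOnBall hLp.fderiv
    exact h1.congr (fun z _ => rfl)
  -- exp (L z) = R z near 0
  have hmem : ∀ z : ℂ, ‖z‖ < et → z ∈ ball (0:ℂ) r := by
    intro z hz
    rw [mem_ball, dist_zero_right]
    exact hz.trans (hetinv.trans (hr.trans_le le_rfl))
  have hexpR : ∀ z : ℂ, ‖z‖ < et → Complex.exp (L z) = R z := by
    intro z hz
    have h2 := (hL z (hz.trans hetε)).2
    have hlz : (1 : ℂ) - (lam : ℂ) * z ≠ 0 := by
      intro h
      rw [sub_eq_zero] at h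
      have := congrArg norm h
      rw [norm_one, norm_mul, Complex.norm_real, Real.norm_eq_abs, abs_of_pos hlam0] at this
      have hb : lam * ‖z‖ < 1 := by
        have h3 := mul_lt_mul_of_pos_left (hz.trans hetinv) hlam0
        rwa [mul_inv_cancel₀ hlam0.ne'] at h3
      rw [← this] at hb
      exact lt_irrefl _ hb
    rw [h2, huf z (hmem z hz), hug z (hmem z hz), mul_div_mul_left _ _ hlz, hRdef]
  have hderivLG : ∀ᶠ z in nhds (0:ℂ), deriv L z = G z := by
    have hball : Metric.ball (0:ℂ) et ∈ nhds (0:ℂ) := ball_mem_nhds _ het0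
    filter_upwards [hball] with z hz
    have hz' : ‖z‖ < et := by rwa [mem_ball, dist_zero_right] at hz
    have hev : (fun w => Complex.exp (L w)) =ᶠ[nhds z] R := by
      filter_upwards [isOpen_ball.mem_nhds hz] with w hw
      exact hexpR w (by rwa [mem_ball, dist_zero_right] at hw)
    have hdL : DifferentiableAt ℂ L z := by
      have hz2 : z ∈ Metric.eball (0:ℂ) (ENNReal.ofReal et) := by
        rw [EMetric.mem_ball, edist_zero_right, ← ofReal_norm]
        exact ENNReal.ofReal_lt_ofReal_iff het0 |>.mpr hz'
      exact (hLp.analyticAt_of_mem hz2).differentiableAt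
    have h1 : deriv (fun w => Complex.exp (L w)) z = deriv R z := hev.deriv_eq
    rw [deriv_cexp hdL, hexpR z hz'] at h1
    have hR0 : R z ≠ 0 := hRne z (hmem z hz')
    show deriv L z = deriv R z / R z
    rw [← h1, mul_comm, mul_div_assoc, div_self hR0, mul_one]
  have hpq : pd = q :=
    (hLd.hasFPowerSeriesAt.congr hderivLG).eq_formalMultilinearSeries hq.hasFPowerSeriesAt
  have hcoeff : ∀ n : ℕ, (a (n+1) : ℂ) = q n (fun _ => 1) := by
    intro n
    rw [← hpq]
    have h1 : pd n (fun _ => (1:ℂ)) = p.derivSeries n (fun _ => (1:ℂ)) 1 := rfl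
    rw [h1, FormalMultilinearSeries.derivSeries_apply_diag,
      hpdef, FormalMultilinearSeries.ofScalars_apply_eq]
    rw [one_pow, smul_eq_mul, mul_one, nsmul_eq_mul]
    have hne : ((n:ℂ) + 1) ≠ 0 := by
      exact Nat.cast_add_one_ne_zero n
    push_cast
    field_simp
  obtain ⟨C, hC, hqb⟩ := hqC
  have habs : ∀ n : ℕ, 1 ≤ n → |(a n : ℝ)| ≤ (C * r0) * (r0⁻¹) ^ n := by
    intro n hn
    obtain ⟨m, rfl⟩ : ∃ m, n = m + 1 := ⟨n - 1, by omega⟩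
    have h1 : |(a (m+1) : ℝ)| = ‖(a (m+1) : ℂ)‖ := by
      rw [Complex.norm_intCast]
    rw [h1, hcoeff m]
    have h2 : ‖q m (fun _ => (1:ℂ))‖ ≤ ‖q m‖ := by
      have h3 := (q m).le_opNorm (fun _ => (1:ℂ))
      simpa using h3
    have h3 : ‖q m‖ ≤ C / r0 ^ m := by
      rw [le_div_iff₀ (by positivity)]
      exact hqb m
    have h4 : C / r0 ^ m = (C * r0) * r0⁻¹ ^ (m+1) := by
      rw [inv_pow, pow_succ]
      field_simp
    rw [← h4]
    exact h2.trans h3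
  set mid : ℝ := (r0⁻¹ + lam)/2 with hmiddef
  have hrlam : r0⁻¹ < lam := by
    rw [← inv_inv lam]
    exact inv_strictAnti₀ (by positivity) h00
  have hmid1 : r0⁻¹ < mid := by rw [hmiddef]; linarith
  have hmid2 : mid < lam := by rw [hmiddef]; linarith
  have hmid0 : 0 < mid := lt_trans (by positivity) hmid1
  have hD : (0:ℝ) < C * r0 := by positivity
  have htend : Filter.Tendsto (fun n : ℕ => (C*r0) ^ (1/(n:ℝ))) atTop (nhds 1) := by
    have h0 : Filter.Tendsto (fun n : ℕ => 1/(n:ℝ)) atTop (nhds 0) :=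
      tendsto_one_div_atTop_nhds_zero_nat
    have h1 : Filter.Tendsto (fun n : ℕ => Real.log (C*r0) * (1/(n:ℝ))) atTop (nhds 0) := by
      simpa using h0.const_mul (Real.log (C*r0))
    have h2 := (Real.continuous_exp.continuousAt (x := 0)).tendsto.comp h1
    rw [Real.exp_zero] at h2
    refine h2.congr fun n => ?_
    simp [Real.rpow_def_of_pos hD, mul_comm]
  have hmr1 : (1:ℝ) < mid * r0 := by
    have := mul_lt_mul_of_pos_right hmid1 hr0pos
    rwa [inv_mul_cancel₀ hr0pos.ne'] at this
  have hev1 : ∀ᶠ n : ℕ in atTop, (C*r0) ^ (1/(n:ℝ)) ≤ mid * r0 :=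
    htend.eventually (eventually_le_nhds hmr1)
  have hev : ∀ᶠ n : ℕ in atTop, (((a n).natAbs : ℝ≥0∞)) ^ (1/(n:ℝ)) ≤ ENNReal.ofReal mid := by
    filter_upwards [hev1, eventually_ge_atTop 1] with n h1 hn
    have hb := habs n hn
    have hnR : (0:ℝ) < (n:ℝ) := by exact_mod_cast hn
    have hstep : |(a n : ℝ)| ^ (1/(n:ℝ)) ≤ mid := by
      have hle : |(a n:ℝ)| ^ (1/(n:ℝ)) ≤ ((C*r0) * r0⁻¹ ^ n) ^ (1/(n:ℝ)) :=
        Real.rpow_le_rpow (abs_nonneg _) hb (by positivity)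
      have heq : ((C*r0) * r0⁻¹ ^ n) ^ (1/(n:ℝ)) = (C*r0) ^ (1/(n:ℝ)) * r0⁻¹ := by
        rw [Real.mul_rpow hD.le (by positivity), ← Real.rpow_natCast r0⁻¹ n,
          ← Real.rpow_mul (by positivity), mul_one_div, div_self hnR.ne', Real.rpow_one]
      rw [heq] at hle
      refine hle.trans ?_
      have h5 : (C*r0) ^ (1/(n:ℝ)) * r0⁻¹ ≤ (mid * r0) * r0⁻¹ :=
        mul_le_mul_of_nonneg_right h1 (by positivity)
      refine h5.trans_eq ?_
      rw [mul_assoc, mul_inv_cancel₀ hr0pos.ne', mul_one]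
    have hcast : (((a n).natAbs : ℝ≥0∞)) = ENNReal.ofReal |(a n : ℝ)| := by
      rw [← ENNReal.ofReal_natCast]
      congr 1
      rw [Nat.cast_natAbs, Int.cast_abs]
    rw [hcast, ENNReal.ofReal_rpow_of_nonneg (abs_nonneg _) (by positivity)]
    exact ENNReal.ofReal_le_ofReal hstep
  refine lt_of_le_of_lt (limsup_le_of_le (by isBoundedDefault) hev) ?_
  rw [ENNReal.ofReal_lt_ofReal_iff hlam0]
  exact hmid2
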